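/- Let n ≥ 2 and let f : [2n−1] → ℝ satisfy f(1)−f(2) ≥ f(2)−f(3) ≥ ⋯ ≥ f(2n−2)−f(2n−1) ≥ 0. Then the alternating partition (A₀, B₀) = ({1,3,…,2n−1}, {2,4,…,2n}) is a maximizer of the objective Σ_{x∈A} Σ_{y∈B} f(|x−y|) over all partitions (A,B) ∈ P_{2n}; that is, for every (A,B) ∈ P_{2n}, Σ_{x∈A} Σ_{y∈B} f(|x−y|) ≤ Σ_{x∈A₀} Σ_{y∈B₀} f(|x−y|). -/

import Mathlib

open Finset

private lemma aux_prod_le_balanced (a b a' b' : ℕ) (hsum : a + b = a' + b')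
    (h1 : a' ≤ b' + 1) (h2 : b' ≤ a' + 1) : a * b ≤ a' * b' := by
  rcases (by omega : a' = b' ∨ a' = b' + 1 ∨ b' = a' + 1) with h | h | h
  · zify at *; nlinarith [sq_nonneg ((a:ℤ) - b)]
  · rcases (by omega : a ≥ b + 1 ∨ b ≥ a + 1) with h' | h'
    · zify at *; nlinarith [sq_nonneg ((a:ℤ) - b - 1)]
    · zify at *; nlinarith [sq_nonneg ((b:ℤ) - a - 1)]
  · rcases (by omega : a ≥ b + 1 ∨ b ≥ a + 1) with h' | h'
    · zify at *; nlinarith [sq_nonneg ((a:ℤ) - b - 1)]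
    · zify at *; nlinarith [sq_nonneg ((b:ℤ) - a - 1)]

private lemma aux_tent_card (N m x y : ℕ) (hx : 1 ≤ x) (hx2 : x ≤ N) (hy : 1 ≤ y)
    (hy2 : y ≤ N) :
    m - Nat.dist x y =
      ((Finset.range (N + m)).filter
        (fun t => (t + 2 ≤ x + m ∧ x ≤ t + 1) ∧ (t + 2 ≤ y + m ∧ y ≤ t + 1))).card := by
  have hd : Nat.dist x y = x - y + (y - x) := rfl
  have heq : ((Finset.range (N + m)).filter
        (fun t => (t + 2 ≤ x + m ∧ x ≤ t + 1) ∧ (t + 2 ≤ y + m ∧ y ≤ t + 1)))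
      = Finset.Ico (max x y - 1) (min x y + m - 1) := by
    ext t
    simp only [mem_filter, mem_range, Finset.mem_Ico]
    omega
  rw [heq, Nat.card_Ico]
  omega

private lemma aux_sum_swap (A B S : Finset ℕ) (W : ℕ → ℕ → Prop) [∀ t x, Decidable (W t x)] :
    ∑ x ∈ A, ∑ y ∈ B, (S.filter (fun t => W t x ∧ W t y)).card =
      ∑ t ∈ S, (A.filter (fun x => W t x)).card * (B.filter (fun y => W t y)).card := by
  have key : ∀ x y, (S.filter (fun t => W t x ∧ W t y)).card
      = ∑ t ∈ S, (if W t x then 1 else 0) * (if W t y then 1 else 0) := by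
    intro x y
    rw [Finset.card_filter]
    refine Finset.sum_congr rfl fun t _ => ?_
    by_cases h1 : W t x <;> by_cases h2 : W t y <;> simp [h1, h2]
  calc ∑ x ∈ A, ∑ y ∈ B, (S.filter (fun t => W t x ∧ W t y)).card
      = ∑ x ∈ A, ∑ t ∈ S, ∑ y ∈ B, (if W t x then 1 else 0) * (if W t y then 1 else 0) := by
        refine Finset.sum_congr rfl fun x _ => ?_
        simp only [key]
        exact Finset.sum_comm
    _ = ∑ t ∈ S, ∑ x ∈ A, ∑ y ∈ B, (if W t x then 1 else 0) * (if W t y then 1 else 0) :=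
        Finset.sum_comm
    _ = ∑ t ∈ S, (A.filter (fun x => W t x)).card * (B.filter (fun y => W t y)).card := by
        refine Finset.sum_congr rfl fun t _ => ?_
        rw [← Finset.sum_mul_sum]
        simp only [Finset.card_filter]

private lemma aux_part_card (A B S : Finset ℕ) (p : ℕ → Prop) [DecidablePred p]
    (hd : Disjoint A B) (hu : A ∪ B = S) :
    (A.filter p).card + (B.filter p).card = (S.filter p).card := by
  rw [← Finset.card_union_of_disjoint (Finset.disjoint_filter_filter hd),
    ← Finset.filter_union, hu]

private lemma aux_odd_card (n m t : ℕ) :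
    (((Finset.range n).image (fun i => 2*i+1)).filter
        (fun x => t + 2 ≤ x + m ∧ x ≤ t + 1)).card
      = min (t/2 + 1) n - (t+2-m)/2 := by
  rw [Finset.filter_image]
  have i1 : Function.Injective (fun i : ℕ => 2*i+1) := fun a b hab => by
    dsimp at hab; omega
  rw [Finset.card_image_of_injective _ i1]
  have f1 : (Finset.range n).filter (fun i => t + 2 ≤ (2*i+1) + m ∧ (2*i+1) ≤ t + 1)
      = Finset.Ico ((t+2-m)/2) (min (t/2 + 1) n) := by
    ext i; simp only [mem_filter, mem_range, Finset.mem_Ico]; omega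
  rw [f1, Nat.card_Ico]

private lemma aux_even_card (n m t : ℕ) :
    (((Finset.range n).image (fun i => 2*i+2)).filter
        (fun x => t + 2 ≤ x + m ∧ x ≤ t + 1)).card
      = min ((t+1)/2) n - (t+1-m)/2 := by
  rw [Finset.filter_image]
  have i2 : Function.Injective (fun i : ℕ => 2*i+2) := fun a b hab => by
    dsimp at hab; omega
  rw [Finset.card_image_of_injective _ i2]
  have f2 : (Finset.range n).filter (fun i => t + 2 ≤ (2*i+2) + m ∧ (2*i+2) ≤ t + 1)
      = Finset.Ico ((t+1-m)/2) (min ((t+1)/2) n) := by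
    ext i; simp only [mem_filter, mem_range, Finset.mem_Ico]; omega
  rw [f2, Nat.card_Ico]

private lemma aux_point (N : ℕ) (hN : 4 ≤ N) (f g : ℕ → ℝ)
    (hgdef : ∀ k, g k = if 1 ≤ k ∧ k ≤ N-2 then f k - f (k+1) else 0)
    (D : ℕ) (h1 : 1 ≤ D) (h2 : D ≤ N-1) :
    f D = f (N-1) + ∑ j ∈ Finset.Icc 1 (N-2), (g j - g (j+1)) * ((j + 1 - D : ℕ) : ℝ) := by
  have tele1 : ∀ d D, D = N - 1 - d → 1 ≤ D →
      f D = f (N-1) + ∑ k ∈ Finset.Icc D (N-2), g k := by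
    intro d
    induction d with
    | zero =>
      intro D hD _
      have : D = N - 1 := by omega
      subst this
      rw [Finset.Icc_eq_empty (by omega), Finset.sum_empty]; ring
    | succ d ih =>
      intro D hD hD1
      rcases le_or_gt (N - 1) D with hc | hc
      · have : D = N - 1 := by omega
        subst this
        rw [Finset.Icc_eq_empty (by omega), Finset.sum_empty]; ring
      · have hDN : D ≤ N - 2 := by omega
        have hins : Finset.Icc D (N-2) = insert D (Finset.Icc (D+1) (N-2)) := by
          ext k; simp only [Finset.mem_Icc, Finset.mem_insert]; omega
        have hnot : D ∉ Finset.Icc (D+1) (N-2) := by simp [Finset.mem_Icc]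
        rw [hins, Finset.sum_insert hnot]
        have := ih (D+1) (by omega) (by omega)
        rw [hgdef D, if_pos ⟨hD1, hDN⟩]
        linarith
  have tele2 : ∀ d D, D = N - 1 - d → 1 ≤ D →
      ∑ j ∈ Finset.Icc D (N-2), (g j - g (j+1)) = g D := by
    intro d
    induction d with
    | zero =>
      intro D hD _
      have : D = N - 1 := by omega
      subst this
      rw [Finset.Icc_eq_empty (by omega), Finset.sum_empty, hgdef, if_neg (by omega)]
    | succ d ih =>
      intro D hD hD1
      rcases le_or_gt (N - 1) D with hc | hc
      · have : D = N - 1 := by omega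
        subst this
        rw [Finset.Icc_eq_empty (by omega), Finset.sum_empty, hgdef, if_neg (by omega)]
      · have hins : Finset.Icc D (N-2) = insert D (Finset.Icc (D+1) (N-2)) := by
          ext k; simp only [Finset.mem_Icc, Finset.mem_insert]; omega
        have hnot : D ∉ Finset.Icc (D+1) (N-2) := by simp [Finset.mem_Icc]
        rw [hins, Finset.sum_insert hnot, ih (D+1) (by omega) (by omega)]
        ring
  rw [tele1 (N - 1 - D) D (by omega) h1]
  congr 1
  have step1 : ∀ k ∈ Finset.Icc D (N-2), g k = ∑ j ∈ Finset.Icc D (N-2),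
      (if k ≤ j then g j - g (j+1) else 0) := by
    intro k hk
    simp only [Finset.mem_Icc] at hk
    rw [← tele2 (N - 1 - k) k (by omega) (by omega)]
    rw [← Finset.sum_filter]
    congr 1
    ext j; simp only [Finset.mem_filter, Finset.mem_Icc]; omega
  rw [Finset.sum_congr rfl step1, Finset.sum_comm]
  have step2 : ∀ j ∈ Finset.Icc D (N-2),
      (∑ k ∈ Finset.Icc D (N-2), if k ≤ j then g j - g (j+1) else 0)
        = (g j - g (j+1)) * ((j + 1 - D : ℕ) : ℝ) := by
    intro j hj
    simp only [Finset.mem_Icc] at hj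
    rw [← Finset.sum_filter]
    have : (Finset.Icc D (N-2)).filter (fun k => k ≤ j) = Finset.Icc D j := by
      ext k; simp only [Finset.mem_filter, Finset.mem_Icc]; omega
    rw [this, Finset.sum_const, Nat.card_Icc, nsmul_eq_mul, mul_comm]
  rw [Finset.sum_congr rfl step2]
  refine Finset.sum_subset ?_ ?_
  · intro j hj; simp only [Finset.mem_Icc] at *; omega
  · intro j hj hj2
    simp only [Finset.mem_Icc] at hj hj2
    have : j + 1 - D = 0 := by omega
    rw [this]; simp

/-- Let `n ≥ 2` and let `f : [2n−1] → ℝ` satisfy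
`f(1)−f(2) ≥ f(2)−f(3) ≥ ⋯ ≥ f(2n−2)−f(2n−1) ≥ 0`.  Then the alternating partition
`(A₀, B₀) = ({1,3,…,2n−1}, {2,4,…,2n})` maximizes `Σ_{x∈A} Σ_{y∈B} f(|x−y|)` over all
partitions `(A,B) ∈ P_{2n}` (pairs of disjoint sets with `|A| = |B| = n` and
`A ∪ B = {1,…,2n}`). -/
theorem alternating_partition_optimal
    (n : ℕ) (hn : 2 ≤ n) (f : ℕ → ℝ)
    (hconv : ∀ i : ℕ, 1 ≤ i → i + 2 ≤ 2 * n - 1 →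
      f (i + 1) - f (i + 2) ≤ f i - f (i + 1))
    (hlast : 0 ≤ f (2 * n - 2) - f (2 * n - 1))
    (A B : Finset ℕ) (hdisj : Disjoint A B)
    (hunion : A ∪ B = Finset.Icc 1 (2 * n))
    (hA : A.card = n) (hB : B.card = n) :
    ∑ x ∈ A, ∑ y ∈ B, f (Nat.dist x y) ≤
      ∑ x ∈ (Finset.range n).image (fun i => 2 * i + 1),
        ∑ y ∈ (Finset.range n).image (fun i => 2 * i + 2), f (Nat.dist x y) := by
  classical
  set N := 2 * n with hNdef
  have hN4 : 4 ≤ N := by omega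
  set A0 := (Finset.range n).image (fun i => 2 * i + 1) with hA0def
  set B0 := (Finset.range n).image (fun i => 2 * i + 2) with hB0def
  have i1 : Function.Injective (fun i : ℕ => 2 * i + 1) := fun a b hab => by
    dsimp at hab; omega
  have i2 : Function.Injective (fun i : ℕ => 2 * i + 2) := fun a b hab => by
    dsimp at hab; omega
  have hA0card : A0.card = n := by
    rw [hA0def, Finset.card_image_of_injective _ i1, Finset.card_range]
  have hB0card : B0.card = n := by
    rw [hB0def, Finset.card_image_of_injective _ i2, Finset.card_range]
  have hdisj0 : Disjoint A0 B0 := by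
    rw [Finset.disjoint_left]
    intro x hx hx'
    rw [hA0def, Finset.mem_image] at hx
    rw [hB0def, Finset.mem_image] at hx'
    obtain ⟨i, _, hi⟩ := hx
    obtain ⟨j, _, hj⟩ := hx'
    omega
  have hunion0 : A0 ∪ B0 = Finset.Icc 1 N := by
    ext x
    simp only [Finset.mem_union, hA0def, hB0def, Finset.mem_image, Finset.mem_range,
      Finset.mem_Icc]
    constructor
    · rintro (⟨i, hi, rfl⟩ | ⟨i, hi, rfl⟩) <;> omega
    · intro hx
      rcases Nat.even_or_odd x with ⟨k, hk⟩ | ⟨k, hk⟩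
      · exact Or.inr ⟨k - 1, by omega, by omega⟩
      · exact Or.inl ⟨k, by omega, by omega⟩
  -- the convex decomposition
  set g : ℕ → ℝ := fun k => if 1 ≤ k ∧ k ≤ N - 2 then f k - f (k+1) else 0 with hgdef
  have hgdef' : ∀ k, g k = if 1 ≤ k ∧ k ≤ N - 2 then f k - f (k+1) else 0 := fun k => rfl
  have hpos : ∀ j ∈ Finset.Icc 1 (N-2), 0 ≤ g j - g (j+1) := by
    intro j hj
    simp only [Finset.mem_Icc] at hj
    rcases le_or_gt (j + 1) (N - 2) with hc | hc
    · rw [hgdef' j, hgdef' (j+1), if_pos ⟨hj.1, hj.2⟩, if_pos ⟨by omega, hc⟩]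
      have := hconv j hj.1 (by omega)
      linarith
    · have hje : j = N - 2 := by omega
      rw [hgdef' j, hgdef' (j+1), if_pos ⟨hj.1, hj.2⟩, if_neg (by omega)]
      rw [hje]
      have h1 : N - 2 + 1 = N - 1 := by omega
      rw [h1]
      simpa [hNdef] using hlast
  -- objective identity
  have hobj : ∀ (A' B' : Finset ℕ), Disjoint A' B' → A' ∪ B' = Finset.Icc 1 N →
      A'.card = n → B'.card = n →
      ∑ x ∈ A', ∑ y ∈ B', f (Nat.dist x y)
        = (n : ℝ) * n * f (N-1) + ∑ j ∈ Finset.Icc 1 (N-2),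
            (g j - g (j+1)) * ((∑ x ∈ A', ∑ y ∈ B', (j + 1 - Nat.dist x y) : ℕ) : ℝ) := by
    intro A' B' hd hu hcA hcB
    have hsubA : A' ⊆ Finset.Icc 1 N := hu ▸ Finset.subset_union_left
    have hsubB : B' ⊆ Finset.Icc 1 N := hu ▸ Finset.subset_union_right
    have hpoint : ∀ x ∈ A', ∀ y ∈ B', f (Nat.dist x y)
        = f (N-1) + ∑ j ∈ Finset.Icc 1 (N-2),
            (g j - g (j+1)) * ((j + 1 - Nat.dist x y : ℕ) : ℝ) := by
      intro x hx y hy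
      have hx' := Finset.mem_Icc.mp (hsubA hx)
      have hy' := Finset.mem_Icc.mp (hsubB hy)
      have hne : x ≠ y := fun h => (Finset.disjoint_left.mp hd hx) (h ▸ hy)
      have hdd : Nat.dist x y = x - y + (y - x) := rfl
      exact aux_point N hN4 f g hgdef' (Nat.dist x y) (by omega) (by omega)
    calc ∑ x ∈ A', ∑ y ∈ B', f (Nat.dist x y)
        = ∑ x ∈ A', ∑ y ∈ B', (f (N-1) + ∑ j ∈ Finset.Icc 1 (N-2),
            (g j - g (j+1)) * ((j + 1 - Nat.dist x y : ℕ) : ℝ)) := by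
          exact Finset.sum_congr rfl fun x hx => Finset.sum_congr rfl fun y hy =>
            hpoint x hx y hy
      _ = (n : ℝ) * n * f (N-1) + ∑ x ∈ A', ∑ y ∈ B', ∑ j ∈ Finset.Icc 1 (N-2),
            (g j - g (j+1)) * ((j + 1 - Nat.dist x y : ℕ) : ℝ) := by
          simp only [Finset.sum_add_distrib, Finset.sum_const, hcA, hcB, nsmul_eq_mul]
          ring
      _ = (n : ℝ) * n * f (N-1) + ∑ j ∈ Finset.Icc 1 (N-2), ∑ x ∈ A', ∑ y ∈ B',
            (g j - g (j+1)) * ((j + 1 - Nat.dist x y : ℕ) : ℝ) := by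
          congr 1
          calc ∑ x ∈ A', ∑ y ∈ B', ∑ j ∈ Finset.Icc 1 (N-2),
                (g j - g (j+1)) * ((j + 1 - Nat.dist x y : ℕ) : ℝ)
              = ∑ x ∈ A', ∑ j ∈ Finset.Icc 1 (N-2), ∑ y ∈ B',
                (g j - g (j+1)) * ((j + 1 - Nat.dist x y : ℕ) : ℝ) :=
                Finset.sum_congr rfl fun x _ => Finset.sum_comm
            _ = _ := Finset.sum_comm
      _ = (n : ℝ) * n * f (N-1) + ∑ j ∈ Finset.Icc 1 (N-2),
            (g j - g (j+1)) * ((∑ x ∈ A', ∑ y ∈ B', (j + 1 - Nat.dist x y) : ℕ) : ℝ) := by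
          congr 1
          refine Finset.sum_congr rfl fun j _ => ?_
          simp only [← Finset.mul_sum]
          congr 1
          push_cast
          rfl
  have htent : ∀ m : ℕ,
      (∑ x ∈ A, ∑ y ∈ B, (m - Nat.dist x y)) ≤ ∑ x ∈ A0, ∑ y ∈ B0, (m - Nat.dist x y) := by
    intro m
    have conv : ∀ (A' B' : Finset ℕ), A' ⊆ Finset.Icc 1 N → B' ⊆ Finset.Icc 1 N →
        ∑ x ∈ A', ∑ y ∈ B', (m - Nat.dist x y)
          = ∑ t ∈ Finset.range (N + m),
              (A'.filter (fun x => t + 2 ≤ x + m ∧ x ≤ t + 1)).card *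
              (B'.filter (fun y => t + 2 ≤ y + m ∧ y ≤ t + 1)).card := by
      intro A' B' hA' hB'
      rw [← aux_sum_swap A' B' (Finset.range (N + m))
        (fun t x => t + 2 ≤ x + m ∧ x ≤ t + 1)]
      refine Finset.sum_congr rfl fun x hx => Finset.sum_congr rfl fun y hy => ?_
      have hx' := Finset.mem_Icc.mp (hA' hx)
      have hy' := Finset.mem_Icc.mp (hB' hy)
      exact aux_tent_card N m x y hx'.1 hx'.2 hy'.1 hy'.2
    rw [conv A B (hunion ▸ Finset.subset_union_left) (hunion ▸ Finset.subset_union_right),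
      conv A0 B0 (hunion0 ▸ Finset.subset_union_left)
        (hunion0 ▸ Finset.subset_union_right)]
    refine Finset.sum_le_sum fun t _ => ?_
    have hsum : (A.filter (fun x => t + 2 ≤ x + m ∧ x ≤ t + 1)).card +
          (B.filter (fun x => t + 2 ≤ x + m ∧ x ≤ t + 1)).card
        = (A0.filter (fun x => t + 2 ≤ x + m ∧ x ≤ t + 1)).card +
          (B0.filter (fun x => t + 2 ≤ x + m ∧ x ≤ t + 1)).card := by
      rw [aux_part_card A B (Finset.Icc 1 N) (fun x => t + 2 ≤ x + m ∧ x ≤ t + 1)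
        hdisj hunion, aux_part_card A0 B0 (Finset.Icc 1 N)
        (fun x => t + 2 ≤ x + m ∧ x ≤ t + 1) hdisj0 hunion0]
    refine aux_prod_le_balanced _ _ _ _ hsum ?_ ?_
    · rw [hA0def, hB0def, aux_odd_card, aux_even_card]; omega
    · rw [hA0def, hB0def, aux_odd_card, aux_even_card]; omega
  rw [hobj A B hdisj hunion hA hB, hobj A0 B0 hdisj0 hunion0 hA0card hB0card]
  refine add_le_add_right (Finset.sum_le_sum fun j hj => ?_) _
  exact mul_le_mul_of_nonneg_left (Nat.cast_le.mpr (htent (j+1))) (hpos j hj)
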